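/- Let 0 < α ≤ 1 and let A : 𝓑 → ℝ be α-Hölder and normalized, i.e. ∫_M e^{A(ax)} da = 1 for all x ∈ 𝓑. Let C_{e^A} denote an α-Hölder constant of the function e^A, and let w : 𝓑 → ℝ be α-Hölder with constant C_w. Then for every n ≥ 1 and all x, y ∈ 𝓑, |L_A^n(w)(x) − L_A^n(w)(y)| ≤ [ C_{e^A}·‖w‖_∞·( 2^{−α} + 2^{−2α} + ⋯ + 2^{−nα} ) + C_w·2^{−nα} ]·d(x,y)^α, where L_A^n denotes the n-th iterate of the Ruelle operator L_A and ‖w‖_∞ the supremum norm of w. -/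

import Mathlib

open MeasureTheory Filter Topology

noncomputable section

instance : Fact (0 < 2 * Real.pi) := ⟨by positivity⟩

/-- The circle `M = ℝ/2πℤ` with arc-length metric. -/
abbrev Circ : Type := AddCircle (2 * Real.pi)

/-- The normalized Haar (Lebesgue) probability measure on the circle. -/
def haarC : Measure Circ := AddCircle.haarAddCircle

/-- The Bernoulli space `𝓑 = M^ℕ`. -/
abbrev Bs : Type := ℕ → Circ

/-- The left shift `σ`. -/
def shift (x : Bs) : Bs := fun n => x (n + 1)

/-- Prepending a symbol: `cons a x = ax = (a, x₀, x₁, …)`. -/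
def cons (a : Circ) (x : Bs) : Bs := fun n =>
  match n with
  | 0 => a
  | k + 1 => x k

/-- The metric `d(x,y) = Σ_k 2^{-k} d_M(x_k, y_k)` on `𝓑`. -/
def dB (x y : Bs) : ℝ := ∑' k : ℕ, (1 / 2 : ℝ) ^ k * dist (x k) (y k)

/-- `A` is α-Hölder with constant `H` for the metric `dB`. -/
def IsHolderB (α H : ℝ) (A : Bs → ℝ) : Prop := ∀ x y, |A x - A y| ≤ H * dB x y ^ α

/-- The Ruelle operator `L_A ψ (x) = ∫_M e^{A(ax)} ψ(ax) da`. -/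
def Ruelle (A : Bs → ℝ) (ψ : Bs → ℝ) : Bs → ℝ :=
  fun x => ∫ a, Real.exp (A (cons a x)) * ψ (cons a x) ∂haarC

/-- `A` is normalized: `∫_M e^{A(ax)} da = 1` for all `x`. -/
def NormalizedB (A : Bs → ℝ) : Prop := ∀ x, ∫ a, Real.exp (A (cons a x)) ∂haarC = 1

instance : IsProbabilityMeasure haarC := by unfold haarC; infer_instance

lemma integrable_of_continuous {f : Circ → ℝ} (hf : Continuous f) : Integrable f haarC := by
  have : Integrable f (AddCircle.haarAddCircle : Measure Circ) :=
    hf.integrable_of_hasCompactSupport (HasCompactSupport.of_compactSpace f)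
  exact this

lemma dist_le_pi (a b : Circ) : dist a b ≤ Real.pi := by
  rw [dist_eq_norm]
  have h := AddCircle.norm_le_half_period (p := 2*Real.pi) (x := a - b)
    (by positivity : (2*Real.pi) ≠ 0)
  rw [abs_of_pos (by positivity : (0:ℝ) < 2*Real.pi)] at h
  linarith

lemma summable_dB (x y : Bs) :
    Summable fun k : ℕ => (1 / 2 : ℝ) ^ k * dist (x k) (y k) := by
  apply Summable.of_nonneg_of_le (fun k => by positivity) (fun k => ?_)
    ((summable_geometric_of_lt_one (r := (1/2:ℝ)) (by norm_num) (by norm_num)).mul_right Real.pi)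
  exact mul_le_mul_of_nonneg_left (dist_le_pi _ _) (by positivity)

lemma dB_nonneg (x y : Bs) : 0 ≤ dB x y :=
  tsum_nonneg fun k => by positivity

lemma dB_le (x y : Bs) : dB x y ≤ 2 * Real.pi := by
  have h := Summable.tsum_le_tsum (f := fun k : ℕ => (1/2:ℝ)^k * dist (x k) (y k))
    (g := fun k : ℕ => (1/2:ℝ)^k * Real.pi)
    (fun k => mul_le_mul_of_nonneg_left (dist_le_pi _ _) (by positivity))
    (summable_dB x y)
    ((summable_geometric_of_lt_one (r := (1/2:ℝ)) (by norm_num) (by norm_num)).mul_right Real.pi)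
  calc dB x y ≤ ∑' k : ℕ, (1/2:ℝ)^k * Real.pi := h
    _ = (∑' k : ℕ, (1/2:ℝ)^k) * Real.pi := tsum_mul_right
    _ = 2 * Real.pi := by rw [tsum_geometric_two]

lemma dB_self (x : Bs) : dB x x = 0 := by
  simp [dB]

lemma dB_cons_cons (a b : Circ) (x y : Bs) :
    dB (cons a x) (cons b y) = dist a b + (1/2) * dB x y := by
  have hs : Summable fun k : ℕ => (1/2:ℝ)^k * dist (cons a x k) (cons b y k) :=
    summable_dB _ _
  rw [dB, Summable.tsum_eq_zero_add hs]
  have h0 : (1/2:ℝ)^(0:ℕ) * dist (cons a x 0) (cons b y 0) = dist a b := by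
    simp [cons]
  rw [h0]
  congr 1
  have : ∀ k : ℕ, (1/2:ℝ)^(k+1) * dist (cons a x (k+1)) (cons b y (k+1))
      = (1/2) * ((1/2:ℝ)^k * dist (x k) (y k)) := by
    intro k
    show (1/2:ℝ)^(k+1) * dist (x k) (y k) = (1/2) * ((1/2:ℝ)^k * dist (x k) (y k))
    ring
  rw [tsum_congr this, tsum_mul_left]
  rfl

/-- Hölder (for `dB`) implies continuity in each inserted coordinate. -/
lemma cont_cons_of_holder {α K : ℝ} (hα0 : 0 < α) {f : Bs → ℝ}
    (hf : ∀ x y, |f x - f y| ≤ K * dB x y ^ α) (x : Bs) :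
    Continuous fun a : Circ => f (cons a x) := by
  have key : ∀ a b : Circ, |f (cons a x) - f (cons b x)| ≤ (|K| + 1) * dist a b ^ α := by
    intro a b
    have h1 := hf (cons a x) (cons b x)
    rw [dB_cons_cons, dB_self, mul_zero, add_zero] at h1
    have hd : (0:ℝ) ≤ dist a b ^ α := Real.rpow_nonneg dist_nonneg α
    nlinarith [le_abs_self K]
  rw [Metric.continuous_iff]
  intro b ε hε
  have hK1 : (0:ℝ) < |K| + 1 := by positivity
  refine ⟨(ε / (|K| + 1)) ^ (1/α), Real.rpow_pos_of_pos (by positivity) _, fun a ha => ?_⟩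
  have h2 : dist a b ^ α < ((ε / (|K| + 1)) ^ (1/α)) ^ α :=
    Real.rpow_lt_rpow dist_nonneg ha hα0
  have h3 : ((ε / (|K| + 1)) ^ (1/α) : ℝ) ^ α = ε / (|K| + 1) := by
    rw [← Real.rpow_mul (by positivity), one_div, inv_mul_cancel₀ (ne_of_gt hα0),
      Real.rpow_one]
  rw [h3] at h2
  calc dist (f (cons a x)) (f (cons b x)) = |f (cons a x) - f (cons b x)| := Real.dist_eq _ _
    _ ≤ (|K| + 1) * dist a b ^ α := key a b
    _ < (|K| + 1) * (ε / (|K| + 1)) := by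
        exact mul_lt_mul_of_pos_left h2 hK1
    _ = ε := by field_simp

/-- basic estimate for iterates of the normalized Ruelle operator on
Hölder functions. -/
theorem iterate_holder_estimate (α : ℝ) (hα0 : 0 < α) (hα1 : α ≤ 1)
    (A : Bs → ℝ) (H : ℝ) (hA : IsHolderB α H A) (hnorm : NormalizedB A)
    (CeA : ℝ) (hCeA : IsHolderB α CeA (fun x => Real.exp (A x)))
    (w : Bs → ℝ) (Cw : ℝ) (hw : IsHolderB α Cw w) :
    ∀ n : ℕ, 1 ≤ n → ∀ x y,
      |(Ruelle A)^[n] w x - (Ruelle A)^[n] w y| ≤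
        (CeA * (⨆ z : Bs, |w z|) * (∑ i ∈ Finset.Icc 1 n, (((1 : ℝ) / 2) ^ α) ^ i)
          + Cw * (((1 : ℝ) / 2) ^ α) ^ n) * dB x y ^ α := by
  set r : ℝ := ((1:ℝ)/2) ^ α with hr
  set S : ℝ := ⨆ z : Bs, |w z| with hS
  set Ck : ℕ → ℝ := fun k => CeA * S * (∑ i ∈ Finset.Icc 1 k, r ^ i) + Cw * r ^ k with hCk
  have hz0 : Bs := fun _ => (0 : Circ)
  -- the range of |w| is bounded above
  have hbdd : BddAbove (Set.range fun z : Bs => |w z|) := by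
    refine ⟨|w hz0| + |Cw| * (2 * Real.pi) ^ α, ?_⟩
    rintro _ ⟨z, rfl⟩
    have h1 := hw z hz0
    have h2 : dB z hz0 ^ α ≤ (2 * Real.pi) ^ α :=
      Real.rpow_le_rpow (dB_nonneg _ _) (dB_le _ _) (le_of_lt hα0)
    have h3 : Cw * dB z hz0 ^ α ≤ |Cw| * (2 * Real.pi) ^ α := by
      calc Cw * dB z hz0 ^ α ≤ |Cw| * dB z hz0 ^ α :=
            mul_le_mul_of_nonneg_right (le_abs_self _) (Real.rpow_nonneg (dB_nonneg _ _) _)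
        _ ≤ |Cw| * (2 * Real.pi) ^ α := mul_le_mul_of_nonneg_left h2 (abs_nonneg _)
    calc |w z| ≤ |w hz0| + |w z - w hz0| := by
          have := abs_sub_abs_le_abs_sub (w z) (w hz0); linarith
      _ ≤ |w hz0| + |Cw| * (2 * Real.pi) ^ α := by linarith
  have hwS : ∀ z, |w z| ≤ S := fun z => le_ciSup hbdd z
  have hS0 : 0 ≤ S := le_trans (abs_nonneg _) (hwS hz0)
  have hr0 : 0 ≤ r := Real.rpow_nonneg (by norm_num) _
  -- key recursion on the constants
  have hsum : ∀ k : ℕ, (∑ i ∈ Finset.Icc 1 k, r ^ i) = r * ∑ i ∈ Finset.range k, r ^ i := by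
    intro k
    induction k with
    | zero => simp
    | succ k ih =>
      rw [Finset.sum_Icc_succ_top (by omega : 1 ≤ k + 1), ih, Finset.sum_range_succ]
      ring
  have hCrec : ∀ k : ℕ, Ck (k + 1) = r * (CeA * S + Ck k) := by
    intro k
    simp only [hCk, hsum, geom_sum_succ]
    ring
  -- main induction
  have key : ∀ k : ℕ,
      (∀ x y, |(Ruelle A)^[k] w x - (Ruelle A)^[k] w y| ≤ Ck k * dB x y ^ α) ∧
      (∀ z, |(Ruelle A)^[k] w z| ≤ S) := by
    intro k
    induction k with
    | zero =>
      constructor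
      · intro x y; simpa [hCk] using hw x y
      · intro z; simpa using hwS z
    | succ k ih =>
      obtain ⟨ihH, ihB⟩ := ih
      set ψ : Bs → ℝ := (Ruelle A)^[k] w with hψ
      have hiter : ∀ z, (Ruelle A)^[k+1] w z = Ruelle A ψ z := by
        intro z; rw [Function.iterate_succ_apply']
      have contA : ∀ x : Bs, Continuous fun a : Circ => A (cons a x) :=
        fun x => cont_cons_of_holder hα0 hA x
      have contψ : ∀ x : Bs, Continuous fun a : Circ => ψ (cons a x) :=
        fun x => cont_cons_of_holder hα0 ihH x
      have hint : ∀ x : Bs,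
          Integrable (fun a => Real.exp (A (cons a x)) * ψ (cons a x)) haarC := by
        intro x
        exact integrable_of_continuous (((contA x).rexp).mul (contψ x))
      have hintE : ∀ x : Bs, Integrable (fun a => Real.exp (A (cons a x))) haarC :=
        fun x => integrable_of_continuous (contA x).rexp
      constructor
      · -- Hölder estimate
        intro x y
        rw [hiter, hiter]
        have hsub : Ruelle A ψ x - Ruelle A ψ y =
            ∫ a, (Real.exp (A (cons a x)) * ψ (cons a x)
              - Real.exp (A (cons a y)) * ψ (cons a y)) ∂haarC := by
          rw [integral_sub (hint x) (hint y)]; rfl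
        set t : ℝ := ((1/2) * dB x y) ^ α with ht
        have htd : ∀ a : Circ, dB (cons a x) (cons a y) = (1/2) * dB x y := by
          intro a; rw [dB_cons_cons]; simp
        have ht0 : 0 ≤ t := Real.rpow_nonneg (mul_nonneg (by norm_num) (dB_nonneg x y)) _
        have hteq : t = r * dB x y ^ α := by
          rw [ht, Real.mul_rpow (by norm_num) (dB_nonneg x y)]
        -- pointwise estimate
        have hpt : ∀ a : Circ,
            |Real.exp (A (cons a x)) * ψ (cons a x)
              - Real.exp (A (cons a y)) * ψ (cons a y)|
            ≤ CeA * t * S + Real.exp (A (cons a y)) * (Ck k * t) := by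
          intro a
          have he := hCeA (cons a x) (cons a y)
          rw [htd a] at he
          have hp := ihH (cons a x) (cons a y)
          rw [htd a] at hp
          have h1 : |Real.exp (A (cons a x)) - Real.exp (A (cons a y))| * |ψ (cons a x)|
              ≤ CeA * t * S := by
            apply mul_le_mul he (ihB _) (abs_nonneg _)
            exact le_trans (abs_nonneg _) he
          have h2 : Real.exp (A (cons a y)) * |ψ (cons a x) - ψ (cons a y)|
              ≤ Real.exp (A (cons a y)) * (Ck k * t) :=
            mul_le_mul_of_nonneg_left hp (le_of_lt (Real.exp_pos _))
          calc |Real.exp (A (cons a x)) * ψ (cons a x)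
              - Real.exp (A (cons a y)) * ψ (cons a y)|
              = |(Real.exp (A (cons a x)) - Real.exp (A (cons a y))) * ψ (cons a x)
                + Real.exp (A (cons a y)) * (ψ (cons a x) - ψ (cons a y))| := by ring_nf
            _ ≤ |(Real.exp (A (cons a x)) - Real.exp (A (cons a y))) * ψ (cons a x)|
                + |Real.exp (A (cons a y)) * (ψ (cons a x) - ψ (cons a y))| := abs_add_le _ _
            _ = |Real.exp (A (cons a x)) - Real.exp (A (cons a y))| * |ψ (cons a x)|
                + Real.exp (A (cons a y)) * |ψ (cons a x) - ψ (cons a y)| := by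
                rw [abs_mul, abs_mul, abs_of_pos (Real.exp_pos _)]
            _ ≤ CeA * t * S + Real.exp (A (cons a y)) * (Ck k * t) := add_le_add h1 h2
        -- integrate
        have hintg : Integrable (fun a =>
            CeA * t * S + Real.exp (A (cons a y)) * (Ck k * t)) haarC :=
          (integrable_const _).add ((hintE y).mul_const _)
        have habs : |Ruelle A ψ x - Ruelle A ψ y| ≤
            ∫ a, (CeA * t * S + Real.exp (A (cons a y)) * (Ck k * t)) ∂haarC := by
          rw [hsub]
          calc |∫ a, (Real.exp (A (cons a x)) * ψ (cons a x)
                - Real.exp (A (cons a y)) * ψ (cons a y)) ∂haarC|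
              ≤ ∫ a, |Real.exp (A (cons a x)) * ψ (cons a x)
                - Real.exp (A (cons a y)) * ψ (cons a y)| ∂haarC := by
                simpa [Real.norm_eq_abs] using
                  norm_integral_le_integral_norm (fun a =>
                    Real.exp (A (cons a x)) * ψ (cons a x)
                      - Real.exp (A (cons a y)) * ψ (cons a y)) (μ := haarC)
            _ ≤ ∫ a, (CeA * t * S + Real.exp (A (cons a y)) * (Ck k * t)) ∂haarC :=
                integral_mono ((hint x).sub (hint y)).abs hintg hpt
        have hval : ∫ a, (CeA * t * S + Real.exp (A (cons a y)) * (Ck k * t)) ∂haarC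
            = CeA * t * S + Ck k * t := by
          rw [integral_add (integrable_const _) ((hintE y).mul_const _),
            integral_const, integral_mul_const, hnorm y]
          simp
        rw [hval] at habs
        calc |Ruelle A ψ x - Ruelle A ψ y| ≤ CeA * t * S + Ck k * t := habs
          _ = (r * (CeA * S + Ck k)) * dB x y ^ α := by rw [hteq]; ring
          _ = Ck (k+1) * dB x y ^ α := by rw [hCrec k]
      · -- sup bound
        intro z
        rw [hiter]
        have hb : ∀ a : Circ, Real.exp (A (cons a z)) * |ψ (cons a z)|
            ≤ Real.exp (A (cons a z)) * S := fun a =>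
          mul_le_mul_of_nonneg_left (ihB _) (le_of_lt (Real.exp_pos _))
        have hint2 : Integrable (fun a => Real.exp (A (cons a z)) * |ψ (cons a z)|) haarC :=
          integrable_of_continuous ((contA z).rexp.mul (contψ z).abs)
        calc |Ruelle A ψ z|
            ≤ ∫ a, Real.exp (A (cons a z)) * |ψ (cons a z)| ∂haarC := by
              show |∫ a, Real.exp (A (cons a z)) * ψ (cons a z) ∂haarC| ≤ _
              simpa [Real.norm_eq_abs] using
                norm_integral_le_integral_norm
                  (fun a => Real.exp (A (cons a z)) * ψ (cons a z)) (μ := haarC)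
          _ ≤ ∫ a, Real.exp (A (cons a z)) * S ∂haarC :=
              integral_mono hint2 ((hintE z).mul_const _) hb
          _ = S := by rw [integral_mul_const, hnorm z, one_mul]
  intro n hn x y
  exact (key n).1 x y
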